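/- For every integer n ≥ 1 and all z: (d/dz) P_n(z; α, β) = n · P_{n−1}(z; α+1, β). -/

import Mathlib

open Finset

/-- Pochhammer symbol `(a)_k = a (a+1) ⋯ (a+k-1)`. -/
noncomputable def poch (a : ℝ) (k : ℕ) : ℝ := ∏ i ∈ Finset.range k, (a + (i : ℝ))

/-- The Hendriksen–van Rossum polynomial `P_n(z; α, β)`. -/
noncomputable def HR (α β : ℝ) (n : ℕ) (z : ℝ) : ℝ :=
  (poch β n / poch (α + 1) n) *
    ∑ k ∈ Finset.range (n + 1),
      poch (-(n : ℝ)) k * poch (α + 1) k /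
          (poch (1 - β - (n : ℝ)) k * (Nat.factorial k : ℝ)) * z ^ k

/-- `d_m(α,β) = −(m+β)/(m+α+1)`. -/
noncomputable def dco (α β m : ℝ) : ℝ := -(m + β) / (m + α + 1)

/-- `b_m(α,β) = −m(m+α+β)/((m+α)(m+α+1))`. -/
noncomputable def bco (α β m : ℝ) : ℝ := -(m * (m + α + β)) / ((m + α) * (m + α + 1))

lemma poch_succ_left (a : ℝ) (k : ℕ) : poch a (k + 1) = a * poch (a + 1) k := by
  rw [poch, poch, Finset.prod_range_succ']
  simp only [Nat.cast_zero, add_zero]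
  rw [mul_comm]
  congr 1
  refine Finset.prod_congr rfl fun i _ => ?_
  push_cast
  ring

lemma poch_succ_right (a : ℝ) (k : ℕ) : poch a (k + 1) = poch a k * (a + k) :=
  Finset.prod_range_succ _ _

lemma poch_ne_zero (a : ℝ) (k : ℕ) (h : ∀ i : ℕ, i < k → a + (i : ℝ) ≠ 0) :
    poch a k ≠ 0 :=
  Finset.prod_ne_zero_iff.mpr fun i hi => h i (Finset.mem_range.mp hi)

/-- `(d/dz) P_n(z; α, β) = n · P_{n−1}(z; α+1, β)` for `n ≥ 1`. -/
theorem stmt4 (α β : ℝ)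
    (hα : ∀ m : ℤ, α ≠ (m : ℝ)) (hβ : ∀ m : ℤ, β ≠ (m : ℝ))
    (hαβ : ∀ m : ℤ, α + β ≠ (m : ℝ))
    (n : ℕ) (hn : 1 ≤ n) (z : ℝ) :
    deriv (HR α β n) z = (n : ℝ) * HR (α + 1) β (n - 1) z := by
  obtain ⟨m, rfl⟩ : ∃ m, n = m + 1 := ⟨n - 1, (Nat.succ_pred_eq_of_pos hn).symm⟩
  have hd : HasDerivAt (HR α β (m + 1))
      ((poch β (m + 1) / poch (α + 1) (m + 1)) *
        ∑ k ∈ Finset.range (m + 1 + 1),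
          poch (-((m + 1 : ℕ) : ℝ)) k * poch (α + 1) k /
              (poch (1 - β - ((m + 1 : ℕ) : ℝ)) k * (Nat.factorial k : ℝ)) *
            ((k : ℝ) * z ^ (k - 1))) z := by
    unfold HR
    exact (HasDerivAt.fun_sum fun k _ => (hasDerivAt_pow k z).const_mul _).const_mul _
  rw [hd.deriv]
  rw [Nat.add_sub_cancel, Finset.sum_range_succ']
  simp only [Nat.cast_zero, zero_mul, mul_zero, add_zero]
  rw [HR, Finset.mul_sum, Finset.mul_sum, Finset.mul_sum]
  refine Finset.sum_congr rfl fun j _ => ?_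
  have e1 : poch β (m + 1) = poch β m * (β + m) := poch_succ_right _ _
  have e2 : poch (α + 1) (m + 1) = (α + 1) * poch (α + 1 + 1) m := poch_succ_left _ _
  have e3 : poch (-((m + 1 : ℕ) : ℝ)) (j + 1) = -((m + 1 : ℕ) : ℝ) * poch (-(m : ℝ)) j := by
    rw [poch_succ_left, show -((m + 1 : ℕ) : ℝ) + 1 = -(m : ℝ) from by push_cast; ring]
  have e4 : poch (α + 1) (j + 1) = (α + 1) * poch (α + 1 + 1) j := poch_succ_left _ _
  have e5 : poch (1 - β - ((m + 1 : ℕ) : ℝ)) (j + 1)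
      = (1 - β - ((m + 1 : ℕ) : ℝ)) * poch (1 - β - (m : ℝ)) j := by
    rw [poch_succ_left,
      show (1 - β - ((m + 1 : ℕ) : ℝ)) + 1 = 1 - β - (m : ℝ) from by push_cast; ring]
  have hα1 : α + 1 ≠ 0 := fun h => hα (-1) (by push_cast; linarith)
  have hA2 : poch (α + 1 + 1) m ≠ 0 :=
    poch_ne_zero _ _ fun i _ => fun h => hα (-(2 + i)) (by push_cast; linarith)
  have hB : poch (1 - β - (m : ℝ)) j ≠ 0 :=
    poch_ne_zero _ _ fun i _ => fun h => hβ (1 - m + i) (by push_cast; linarith)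
  have hβm : β + (m : ℝ) ≠ 0 := fun h => hβ (-m) (by push_cast; linarith)
  have hβm' : (1 : ℝ) - β - ((m + 1 : ℕ) : ℝ) ≠ 0 := by
    push_cast; intro h; apply hβm; linarith
  have hfj : (Nat.factorial j : ℝ) ≠ 0 := Nat.cast_ne_zero.mpr (Nat.factorial_ne_zero j)
  rw [e1, e2, e3, e4, e5, Nat.factorial_succ, Nat.add_sub_cancel]
  push_cast at hβm' ⊢
  have hj1 : (j : ℝ) + 1 ≠ 0 := by positivity
  set p1 := poch β m
  set p2 := poch (α + 1 + 1) m
  set p3 := poch (-(m : ℝ)) j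
  set p4 := poch (α + 1 + 1) j
  set p5 := poch (1 - β - (m : ℝ)) j
  field_simp
  ring
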